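/- For an arbitrary permutation π ∈ S_n, every element (i,j) of the essential set E(π) of rank r satisfies i + j ≤ n + r. -/

import Mathlib

/-- `π` contains the pattern `τ`: there is a strictly increasing choice of positions
whose values appear in the same relative order as `τ`. -/
def Contains {n k : ℕ} (π : Equiv.Perm (Fin n)) (τ : Equiv.Perm (Fin k)) : Prop :=
  ∃ f : Fin k → Fin n, StrictMono f ∧ ∀ a b : Fin k, τ a < τ b ↔ π (f a) < π (f b)

/-- `π` avoids the pattern `τ`. -/
def Avoids {n k : ℕ} (π : Equiv.Perm (Fin n)) (τ : Equiv.Perm (Fin k)) : Prop :=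
  ¬ Contains π τ

/-- The pattern 1243 (in one-line notation), as a permutation of `Fin 4` (0-based). -/
def pat1243 : Equiv.Perm (Fin 4) := Equiv.swap 2 3

/-- The pattern 2143 (in one-line notation), as a permutation of `Fin 4` (0-based). -/
def pat2143 : Equiv.Perm (Fin 4) := Equiv.swap 0 1 * Equiv.swap 2 3

/-- A Schröder permutation avoids both 1243 and 2143. -/
def Schroeder {n : ℕ} (π : Equiv.Perm (Fin n)) : Prop :=
  Avoids π pat1243 ∧ Avoids π pat2143

/-- The diagram of `π` (0-based coordinates): squares `(i,j)` with `π i > j` and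
`π⁻¹ j > i`. -/
def Diagram {n : ℕ} (π : Equiv.Perm (Fin n)) : Set (Fin n × Fin n) :=
  {p | p.2 < π p.1 ∧ p.1 < π.symm p.2}

/-- The essential set of `π`: squares of the diagram whose east and south neighbours
are not in the diagram. -/
def EssSet {n : ℕ} (π : Equiv.Perm (Fin n)) : Set (Fin n × Fin n) :=
  {p | p ∈ Diagram π ∧
    (∀ i' : Fin n, (i' : ℕ) = (p.1 : ℕ) + 1 → (i', p.2) ∉ Diagram π) ∧
    (∀ j' : Fin n, (j' : ℕ) = (p.2 : ℕ) + 1 → (p.1, j') ∉ Diagram π)}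

/-- The rank of a square `(i,j)`: the number of positions `k < i` with `π k < j`. -/
def rank {n : ℕ} (π : Equiv.Perm (Fin n)) (p : Fin n × Fin n) : ℕ :=
  (Finset.univ.filter fun k : Fin n => k < p.1 ∧ π k < p.2).card

/-- For any permutation, every element `(i,j)` of the essential set of rank `r` satisfies
`i + j ≤ n + r` (in 1-based coordinates; here `(p.1+1, p.2+1)` are the 1-based coordinates). -/
theorem essSet_add_le (n : ℕ) (π : Equiv.Perm (Fin n)) (p : Fin n × Fin n)
    (hp : p ∈ EssSet π) :
    ((p.1 : ℕ) + 1) + ((p.2 : ℕ) + 1) ≤ n + rank π p := by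
  obtain ⟨⟨h1, h2⟩, -, -⟩ := hp
  set i := p.1 with hi
  set j := p.2 with hj
  have hne : ∀ k : Fin n, k ≤ i → π k ≠ j := by
    intro k hk hkj
    have : k = π.symm j := by simp [← hkj]
    exact absurd (this ▸ hk) (not_le.mpr h2)
  have hsplit :
      ((Finset.Iic i).filter fun k => π k < j).card +
        ((Finset.Iic i).filter fun k => ¬ π k < j).card = (Finset.Iic i).card :=
    Finset.card_filter_add_card_filter_not _
  have hIic : (Finset.Iic i).card = (i : ℕ) + 1 := by
    simp [Fin.card_Iic i]
  have hrank : ((Finset.Iic i).filter fun k => π k < j).card = rank π p := by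
    unfold rank
    congr 1
    ext k
    simp only [Finset.mem_filter, Finset.mem_Iic, Finset.mem_univ, true_and, ← hi, ← hj]
    constructor
    · rintro ⟨hk, hkj⟩
      refine ⟨lt_of_le_of_ne hk ?_, hkj⟩
      rintro rfl
      exact absurd h1 (not_lt.mpr hkj.le)
    · rintro ⟨hk, hkj⟩; exact ⟨hk.le, hkj⟩
  have hinj : ((Finset.Iic i).filter fun k => ¬ π k < j).card ≤ (Finset.Ioi j).card := by
    apply Finset.card_le_card_of_injOn π
    · intro k hk
      simp only [Finset.mem_coe, Finset.mem_filter, Finset.mem_Iic] at hk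
      simp only [Finset.mem_coe, Finset.mem_Ioi]
      exact lt_of_le_of_ne (not_lt.mp hk.2) (Ne.symm (hne k hk.1))
    · exact fun a _ b _ h => π.injective h
  have hIoi : (Finset.Ioi j).card = n - 1 - (j : ℕ) := by
    simp [Fin.card_Ioi j]
  have hjn : (j : ℕ) < n := j.isLt
  omega
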